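/- Continuity at points of finite density of the gradient measure: let U be a metric surface, u : U → ℝ weakly monotone, and ρ an integrable upper gradient of u such that for every compactly contained connected neighborhood V of radius r around x₀, 2r · sup_{x,y∈V}|u(y) − u(x)| ≤ (4/π) ∫_{B(x₀,2r)} ρ dH². Then u is continuous at every point x where limsup_{r→0⁺} r^{−2} ∫_{B(x,2r)} ρ dH² < ∞; in particular u is continuous H²-almost everywhere. -/

import Mathlib

open Set Metric MeasureTheory Filter
open scoped MeasureTheory ENNReal

/-- Continuity of a weakly monotone function at points of finite density of the gradient
measure, given the oscillation estimate; in particular continuity `H²`-almost everywhere. -/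
theorem continuity_at_finite_density {U : Type*} [MetricSpace U]
    [MeasurableSpace U] [BorelSpace U] (hU : Nonempty (U ≃ₜ (ℝ × ℝ)))
    (hloc : ∀ K : Set U, IsCompact K → (μH[2] : Measure U) K < ⊤)
    (u : U → ℝ) (ρ : U → ℝ≥0∞) (hρmeas : Measurable ρ)
    (hρint : ∫⁻ x, ρ x ∂(μH[2] : Measure U) < ⊤)
    (hmono : ∀ V : Set U, IsOpen V → IsCompact (closure V) →
      BddAbove (u '' frontier V) ∧ BddBelow (u '' frontier V) ∧
      ∀ x ∈ V, u x ≤ sSup (u '' frontier V) ∧ sInf (u '' frontier V) ≤ u x)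
    (hosc : ∀ x₀ : U, ∀ r : ℝ, 0 < r → IsCompact (closure (ball x₀ (2 * r))) →
      ∀ x ∈ connectedComponentIn (ball x₀ r) x₀,
      ∀ y ∈ connectedComponentIn (ball x₀ r) x₀,
        ENNReal.ofReal (2 * r * |u y - u x|) ≤
          ENNReal.ofReal (4 / Real.pi) *
            ∫⁻ z in ball x₀ (2 * r), ρ z ∂(μH[2] : Measure U)) :
    (∀ x : U,
      (∃ C : ℝ, ∀ᶠ r in nhdsWithin (0 : ℝ) (Ioi 0),
        ∫⁻ z in ball x (2 * r), ρ z ∂(μH[2] : Measure U) ≤ ENNReal.ofReal (C * r ^ 2)) →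
      ContinuousAt u x) ∧
    (∀ᵐ x ∂(μH[2] : Measure U), ContinuousAt u x) := by
  obtain ⟨e⟩ := hU
  haveI : LocallyCompactSpace U := e.locallyCompactSpace_iff.mpr inferInstance
  haveI : LocallyConnectedSpace U := e.locallyConnectedSpace
  haveI : SecondCountableTopology U := e.secondCountableTopology
  have hπ : (0 : ℝ) < Real.pi := Real.pi_pos
  -- Part 1: continuity at points of finite density
  have part1 : ∀ x : U,
      (∃ C : ℝ, ∀ᶠ r in nhdsWithin (0 : ℝ) (Ioi 0),
        ∫⁻ z in ball x (2 * r), ρ z ∂(μH[2] : Measure U) ≤ ENNReal.ofReal (C * r ^ 2)) →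
      ContinuousAt u x := by
    rintro x ⟨C, hC⟩
    set C' : ℝ := max C 0 with hC'def
    have hC0 : 0 ≤ C' := le_max_right _ _
    have hC2 : ∀ᶠ r in nhdsWithin (0 : ℝ) (Ioi 0),
        ∫⁻ z in ball x (2 * r), ρ z ∂(μH[2] : Measure U) ≤ ENNReal.ofReal (C' * r ^ 2) := by
      filter_upwards [hC] with r hr
      refine hr.trans (ENNReal.ofReal_le_ofReal ?_)
      exact mul_le_mul_of_nonneg_right (le_max_left C 0) (sq_nonneg r)
    obtain ⟨K, hK, hKx⟩ := exists_compact_mem_nhds x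
    obtain ⟨ε₀, hε₀, hballK⟩ := Metric.mem_nhds_iff.mp hKx
    have hcmp : ∀ r : ℝ, 2 * r < ε₀ → IsCompact (closure (ball x (2 * r))) := by
      intro r hrε
      refine hK.of_isClosed_subset isClosed_closure ?_
      exact (Metric.closure_ball_subset_closedBall.trans
        (closedBall_subset_ball hrε)).trans hballK
    rw [ContinuousAt, Metric.tendsto_nhds]
    intro ε hε
    set δ : ℝ := min (ε₀ / 2) (Real.pi * ε / (2 * C' + 1)) with hδdef
    have hδpos : 0 < δ := by
      apply lt_min (by linarith)
      apply div_pos (by positivity) (by linarith)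
    obtain ⟨r, hrC, hrmem⟩ :=
      (hC2.and (eventually_of_mem (Ioo_mem_nhdsGT_of_mem ⟨le_refl (0:ℝ), hδpos⟩)
        (fun r hr => hr))).exists
    obtain ⟨hr0, hrδ⟩ := hrmem
    have hrε₀ : 2 * r < ε₀ := by
      have := lt_of_lt_of_le hrδ (min_le_left _ _); linarith
    have hrπ : r < Real.pi * ε / (2 * C' + 1) := lt_of_lt_of_le hrδ (min_le_right _ _)
    have hV : connectedComponentIn (ball x r) x ∈ nhds x :=
      connectedComponentIn_mem_nhds (ball_mem_nhds x hr0)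
    filter_upwards [hV] with y hy
    have hxV : x ∈ connectedComponentIn (ball x r) x :=
      mem_connectedComponentIn (mem_ball_self hr0)
    have h1 := hosc x r hr0 (hcmp r hrε₀) x hxV y hy
    have h2 : ENNReal.ofReal (2 * r * |u y - u x|) ≤
        ENNReal.ofReal (4 / Real.pi * (C' * r ^ 2)) := by
      refine h1.trans ?_
      rw [ENNReal.ofReal_mul (by positivity)]
      exact mul_le_mul_right hrC _
    have h3 : 2 * r * |u y - u x| ≤ 4 / Real.pi * (C' * r ^ 2) :=
      (ENNReal.ofReal_le_ofReal_iff (by positivity)).mp h2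
    have habs : 0 ≤ |u y - u x| := abs_nonneg _
    rw [Real.dist_eq]
    -- from h3 : 2r·A ≤ (4/π)·C'·r², conclude A < ε
    have hπε : (2 * C' + 1) * r < Real.pi * ε := by
      have h := (lt_div_iff₀ (by linarith : (0:ℝ) < 2 * C' + 1)).mp hrπ
      linarith
    by_contra hcon
    push_neg at hcon
    have h4 : Real.pi * (2 * r * |u y - u x|) ≤ 4 * (C' * r ^ 2) := by
      have h := mul_le_mul_of_nonneg_left h3 hπ.le
      have heq : Real.pi * (4 / Real.pi * (C' * r ^ 2)) = 4 * (C' * r ^ 2) := by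
        field_simp
      rw [heq] at h
      exact h
    have h5 : 2 * r * (Real.pi * ε) ≤ 4 * (C' * r ^ 2) := by
      nlinarith [mul_le_mul_of_nonneg_left (mul_le_mul_of_nonneg_left hcon hπ.le)
        (by linarith : (0:ℝ) ≤ 2 * r), h4]
    nlinarith [h5, mul_lt_mul_of_pos_left hπε (by linarith : (0:ℝ) < 2 * r),
      mul_pos hr0 hr0]
  refine ⟨part1, ?_⟩
  -- Part 2: almost everywhere continuity
  set ν : Measure U := (μH[2] : Measure U).withDensity ρ with hνdef
  have hνball : ∀ (y : U) (s : ℝ),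
      ν (ball y s) = ∫⁻ z in ball y s, ρ z ∂(μH[2] : Measure U) := fun y s =>
    withDensity_apply ρ measurableSet_ball
  have hI : ν univ ≠ ⊤ := by
    rw [hνdef, withDensity_apply ρ MeasurableSet.univ, Measure.restrict_univ]
    exact hρint.ne
  set E : Set U := {x : U | ¬ ∃ C : ℝ, ∀ᶠ r in nhdsWithin (0 : ℝ) (Ioi 0),
      ∫⁻ z in ball x (2 * r), ρ z ∂(μH[2] : Measure U) ≤ ENNReal.ofReal (C * r ^ 2)}
    with hEdef
  have key : ∀ M : ℝ, 0 < M →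
      (μH[2] : Measure U) E ≤ ENNReal.ofReal (256 / M) * ν univ := by
    intro M hM
    have main : ∀ n : ℕ, ∃ (ι : Type _) (_ : Countable ι) (t : ι → Set U),
        (∀ i, EMetric.diam (t i) ≤ ENNReal.ofReal (16 / (n + 1))) ∧ (E ⊆ ⋃ i, t i) ∧
        (∑' i, EMetric.diam (t i) ^ (2 : ℝ)) ≤ ENNReal.ofReal (256 / M) * ν univ := by
      intro n
      have hδ : (0 : ℝ) < 1 / (n + 1) := by positivity
      have hsel : ∀ x ∈ E, ∃ s : ℝ, 0 < s ∧ s < 1 / (n + 1) ∧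
          ENNReal.ofReal (M * s ^ 2) < ν (ball x (2 * s)) := by
        intro x hx
        rw [hEdef, mem_setOf_eq] at hx
        push_neg at hx
        have hfreq : ∃ᶠ r in nhdsWithin (0 : ℝ) (Ioi 0),
            ¬ (∫⁻ z in ball x (2 * r), ρ z ∂(μH[2] : Measure U) ≤
              ENNReal.ofReal (M * r ^ 2)) := (hx M).mono (fun r h => not_le.mpr h)
        rcases frequently_iff.mp hfreq (Ioo_mem_nhdsGT_of_mem ⟨le_refl (0:ℝ), hδ⟩) with
          ⟨s, hs, hlt⟩
        exact ⟨s, hs.1, hs.2, by rw [hνball]; exact not_le.mp hlt⟩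
      choose! s hs0 hsδ hsν using hsel
      obtain ⟨v, hvE, hvdisj, hvcov⟩ :=
        Vitali.exists_disjoint_subfamily_covering_enlargement_closedBall E (fun a => a)
          (fun a => 2 * s a) (2 / (n + 1))
          (fun a ha => by
            have h := (hsδ a ha).le
            calc 2 * s a ≤ 2 * (1 / (n + 1)) :=
                  mul_le_mul_of_nonneg_left h (by norm_num)
              _ = 2 / (n + 1) := by ring)
          4 (by norm_num)
      have hvcount : v.Countable := by
        refine hvdisj.countable_of_nonempty_interior (fun a ha => ?_)
        have hsa : 0 < s a := hs0 a (hvE ha)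
        exact ⟨a, ball_subset_interior_closedBall (mem_ball_self (by simpa using by positivity))⟩
      haveI := hvcount.to_subtype
      refine ⟨v, inferInstance, fun b => closedBall (b : U) (4 * (2 * s b)), ?_, ?_, ?_⟩
      · intro i
        have hsi : 0 < s i := hs0 i (hvE i.2)
        calc EMetric.diam (closedBall (i : U) (4 * (2 * s i)))
            ≤ 2 * ENNReal.ofReal (4 * (2 * s i)) := by
              rw [← Metric.emetric_closedBall (by positivity)]
              exact EMetric.diam_closedBall
          _ = ENNReal.ofReal (16 * s i) := by
              rw [show ((2:ℝ≥0∞) = ENNReal.ofReal 2) by norm_num,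
                ← ENNReal.ofReal_mul (by norm_num)]
              ring_nf
          _ ≤ ENNReal.ofReal (16 / (n + 1)) := by
              refine ENNReal.ofReal_le_ofReal ?_
              have h := (hsδ i (hvE i.2)).le
              calc 16 * s i ≤ 16 * (1 / (n + 1)) :=
                    mul_le_mul_of_nonneg_left h (by norm_num)
                _ = 16 / (n + 1) := by ring
      · intro a ha
        obtain ⟨b, hb, hsub⟩ := hvcov a ha
        have hsa : 0 < s a := hs0 a ha
        exact mem_iUnion.mpr ⟨⟨b, hb⟩, hsub (mem_closedBall_self (by positivity))⟩
      · have hstep : ∀ i : v, EMetric.diam (closedBall (i : U) (4 * (2 * s i))) ^ (2:ℝ) ≤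
            ENNReal.ofReal (256 / M) * ν (closedBall (i : U) (2 * s i)) := by
          intro i
          have hsi : 0 < s i := hs0 i (hvE i.2)
          have hd : EMetric.diam (closedBall (i : U) (4 * (2 * s i))) ≤
              ENNReal.ofReal (16 * s i) := by
            calc EMetric.diam (closedBall (i : U) (4 * (2 * s i)))
                ≤ 2 * ENNReal.ofReal (4 * (2 * s i)) := by
                  rw [← Metric.emetric_closedBall (by positivity)]
                  exact EMetric.diam_closedBall
              _ = ENNReal.ofReal (16 * s i) := by
                  rw [show ((2:ℝ≥0∞) = ENNReal.ofReal 2) by norm_num,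
                    ← ENNReal.ofReal_mul (by norm_num)]
                  ring_nf
          calc EMetric.diam (closedBall (i : U) (4 * (2 * s i))) ^ (2:ℝ)
              ≤ ENNReal.ofReal (16 * s i) ^ (2:ℝ) :=
                ENNReal.rpow_le_rpow hd (by norm_num)
            _ = ENNReal.ofReal ((16 * s i) ^ (2:ℝ)) :=
                ENNReal.ofReal_rpow_of_nonneg (by positivity) (by norm_num)
            _ = ENNReal.ofReal (256 / M * (M * s i ^ 2)) := by
                rw [Real.rpow_two]
                congr 1
                field_simp
                ring
            _ = ENNReal.ofReal (256 / M) * ENNReal.ofReal (M * s i ^ 2) :=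
                ENNReal.ofReal_mul (by positivity)
            _ ≤ ENNReal.ofReal (256 / M) * ν (closedBall (i : U) (2 * s i)) := by
                refine mul_le_mul_right ?_ _
                exact ((hsν i (hvE i.2)).le).trans (measure_mono ball_subset_closedBall)
        calc (∑' i : v, EMetric.diam (closedBall (i : U) (4 * (2 * s i))) ^ (2:ℝ))
            ≤ ∑' i : v, ENNReal.ofReal (256 / M) * ν (closedBall (i : U) (2 * s i)) :=
              ENNReal.tsum_le_tsum hstep
          _ = ENNReal.ofReal (256 / M) * ∑' i : v, ν (closedBall (i : U) (2 * s i)) :=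
              ENNReal.tsum_mul_left
          _ = ENNReal.ofReal (256 / M) * ν (⋃ b ∈ v, closedBall b (2 * s b)) := by
              rw [measure_biUnion hvcount hvdisj (fun b _ => measurableSet_closedBall)]
          _ ≤ ENNReal.ofReal (256 / M) * ν univ :=
              mul_le_mul_right (measure_mono (subset_univ _)) _
    choose ι hι t hdiam hcov hsum using main
    haveI : ∀ n, Countable (ι n) := hι
    have htend : Tendsto (fun n : ℕ => ENNReal.ofReal (16 / (n + 1))) atTop (nhds 0) := by
      have h0 : Tendsto (fun n : ℕ => 16 / ((n : ℝ) + 1)) atTop (nhds 0) := by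
        have := tendsto_one_div_add_atTop_nhds_zero_nat.const_mul (16 : ℝ)
        simpa [mul_one_div, div_eq_mul_inv] using this
      have := (ENNReal.continuous_ofReal.tendsto 0).comp h0
      simpa [Function.comp_def] using this
    have hH := Measure.hausdorffMeasure_le_liminf_tsum (2 : ℝ) E
      (fun n : ℕ => ENNReal.ofReal (16 / (n + 1))) htend t
      (Eventually.of_forall hdiam) (Eventually.of_forall hcov)
    refine hH.trans ?_
    exact liminf_le_of_frequently_le' (Frequently.of_forall hsum)
  have hEnull : (μH[2] : Measure U) E = 0 := by
    have htend : Tendsto (fun k : ℕ => ENNReal.ofReal (256 / ((k : ℝ) + 1)) * ν univ)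
        atTop (nhds 0) := by
      have h0 : Tendsto (fun k : ℕ => 256 / ((k : ℝ) + 1)) atTop (nhds 0) := by
        have := tendsto_one_div_add_atTop_nhds_zero_nat.const_mul (256 : ℝ)
        simpa [mul_one_div, div_eq_mul_inv] using this
      have h1 : Tendsto (fun k : ℕ => ENNReal.ofReal (256 / ((k : ℝ) + 1))) atTop (nhds 0) := by
        have := (ENNReal.continuous_ofReal.tendsto 0).comp h0
        simpa [Function.comp_def] using this
      have := ENNReal.Tendsto.mul_const h1 (Or.inr hI)
      simpa using this
    have hle : ∀ k : ℕ, (μH[2] : Measure U) E ≤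
        ENNReal.ofReal (256 / ((k : ℝ) + 1)) * ν univ := fun k =>
      key ((k : ℝ) + 1) (by positivity)
    exact le_zero_iff.mp (ge_of_tendsto' htend hle)
  rw [ae_iff]
  refine measure_mono_null ?_ hEnull
  intro x hx
  by_contra hxE
  exact hx (part1 x (not_not.mp hxE))
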